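/- Let f, g : ℕ → ℝ be such that g(n) = f(n+1) for every n ∈ ℕ and f(0) is a positive integer. Then g is a D0L-growth function if and only if f is a D0L-growth function. -/

import Mathlib

/-- A function `f : ℕ → ℝ` is a D0L-growth function if there is a D0L-system
`(A, σ, w)` such that `f n` is the length of `σⁿ(w)` for every `n`. -/
def IsD0LGrowth (f : ℕ → ℝ) : Prop :=
  ∃ (A : Type) (_ : Fintype A) (σ : FreeMonoid A →* FreeMonoid A) (w : FreeMonoid A),
    ∀ n : ℕ, f n = ((⇑σ)^[n] w).length

private def extHom {A : Type} (σ : FreeMonoid A →* FreeMonoid A) (w : FreeMonoid A) :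
    FreeMonoid (A ⊕ Bool) →* FreeMonoid (A ⊕ Bool) :=
  FreeMonoid.lift (fun b => match b with
    | Sum.inl a => (FreeMonoid.map Sum.inl) (σ (FreeMonoid.of a))
    | Sum.inr true => (FreeMonoid.map Sum.inl) w
    | Sum.inr false => 1)

private theorem extHom_comm {A : Type} (σ : FreeMonoid A →* FreeMonoid A) (w : FreeMonoid A)
    (u : FreeMonoid A) :
    extHom σ w ((FreeMonoid.map Sum.inl) u) = (FreeMonoid.map Sum.inl) (σ u) := by
  have : (extHom σ w).comp (FreeMonoid.map Sum.inl) =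
      (FreeMonoid.map Sum.inl).comp σ := by
    apply FreeMonoid.hom_eq
    intro x
    simp [extHom, FreeMonoid.map_of, FreeMonoid.lift_eval_of]
  exact DFunLike.congr_fun this u

private theorem extHom_iter {A : Type} (σ : FreeMonoid A →* FreeMonoid A) (w : FreeMonoid A)
    (u : FreeMonoid A) (n : ℕ) :
    (⇑(extHom σ w))^[n] ((FreeMonoid.map Sum.inl) u) =
      (FreeMonoid.map Sum.inl) ((⇑σ)^[n] u) := by
  induction n generalizing u with
  | zero => rfl
  | succ n ih =>
    rw [Function.iterate_succ_apply, extHom_comm, ih, Function.iterate_succ_apply]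

private theorem length_map {A B : Type} (φ : A → B) (u : FreeMonoid A) :
    ((FreeMonoid.map φ) u).length = u.length :=
  List.length_map _

theorem stmt_11 (f g : ℕ → ℝ) (hg : ∀ n : ℕ, g n = f (n + 1))
    (hf0 : ∃ m : ℕ, 0 < m ∧ f 0 = (m : ℝ)) :
    IsD0LGrowth g ↔ IsD0LGrowth f := by
  obtain ⟨m, hm, hf0⟩ := hf0
  constructor
  · rintro ⟨A, _, σ, w, hw⟩
    refine ⟨A ⊕ Bool, inferInstance, extHom σ w,
      FreeMonoid.ofList (Sum.inr true :: List.replicate (m - 1) (Sum.inr false)), ?_⟩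
    intro n
    cases n with
    | zero =>
      show f 0 = ((Sum.inr true :: List.replicate (m - 1)
        (Sum.inr false : A ⊕ Bool)).length : ℝ)
      rw [hf0, List.length_cons, List.length_replicate]
      norm_cast
      omega
    | succ n =>
      have h1 : extHom σ w (FreeMonoid.ofList
          (Sum.inr true :: List.replicate (m - 1) (Sum.inr false))) =
          (FreeMonoid.map Sum.inl) w := by
        rw [extHom, FreeMonoid.lift_apply]
        simp [List.map_replicate]
      rw [Function.iterate_succ_apply, h1, extHom_iter, ← hg n, hw n]
      exact_mod_cast congrArg (Nat.cast : ℕ → ℝ) (length_map Sum.inl ((⇑σ)^[n] w)).symm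
  · rintro ⟨A, _, σ, w, hw⟩
    refine ⟨A, ‹_›, σ, σ w, ?_⟩
    intro n
    rw [hg n, hw (n + 1), Function.iterate_succ_apply]
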